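/- Let a, b, c, d be positive integers such that a, b, and cd are pairwise coprime. Denoting by x*_q the multiplicative inverse of x modulo q, one has the congruence (acd)*_b / b ≡ 1/(abcd) - (bcd)*_a / a - (ab)*_{cd} / (cd) (mod 1), i.e., acd·(acd)*_b ≡ 1 - bcd·(bcd)*_a - ab·(ab)*_{cd} (mod abcd). -/
import Mathlib


/-- If `a`, `b`, `cd` are pairwise coprime and `u, v, w` are inverses of
`acd mod b`, `bcd mod a`, `ab mod cd` respectively, then
`acd·(acd)*_b ≡ 1 - bcd·(bcd)*_a - ab·(ab)*_{cd} (mod abcd)`. -/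
theorem stmt_15 (a b c d u v w : ℤ) (ha : 0 < a) (hb : 0 < b) (hc : 0 < c) (hd : 0 < d)
    (hab : IsCoprime a b) (hacd : IsCoprime a (c * d)) (hbcd : IsCoprime b (c * d))
    (hu : a * c * d * u ≡ 1 [ZMOD b])
    (hv : b * c * d * v ≡ 1 [ZMOD a])
    (hw : a * b * w ≡ 1 [ZMOD c * d]) :
    a * c * d * u ≡ 1 - b * c * d * v - a * b * w [ZMOD a * b * c * d] := by
  set X := a * c * d * u with hX
  set Y := b * c * d * v with hY
  set Z := a * b * w with hZ
  have hda : a ∣ (1 - Y - Z) - X := by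
    have h1 : a ∣ 1 - Y := Int.ModEq.dvd hv
    have h2 : a ∣ Z := ⟨b * w, by ring⟩
    have h3 : a ∣ X := ⟨c * d * u, by ring⟩
    have := dvd_sub (dvd_sub h1 h2) h3
    simpa using this
  have hdb : b ∣ (1 - Y - Z) - X := by
    have h1 : b ∣ 1 - X := Int.ModEq.dvd hu
    have h2 : b ∣ Z := ⟨a * w, by ring⟩
    have h3 : b ∣ Y := ⟨c * d * v, by ring⟩
    have := dvd_sub (dvd_sub h1 h3) h2
    have h4 : (1 - X) - Y - Z = (1 - Y - Z) - X := by ring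
    rwa [h4] at this
  have hdcd : c * d ∣ (1 - Y - Z) - X := by
    have h1 : c * d ∣ 1 - Z := Int.ModEq.dvd hw
    have h2 : c * d ∣ X := ⟨a * u, by ring⟩
    have h3 : c * d ∣ Y := ⟨b * v, by ring⟩
    have := dvd_sub (dvd_sub h1 h3) h2
    have h4 : (1 - Z) - Y - X = (1 - Y - Z) - X := by ring
    rwa [h4] at this
  have hABd : a * b ∣ (1 - Y - Z) - X := hab.mul_dvd hda hdb
  have habcd : IsCoprime (a * b) (c * d) := IsCoprime.mul_left hacd hbcd
  have hfin : a * b * (c * d) ∣ (1 - Y - Z) - X := habcd.mul_dvd hABd hdcd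
  have : a * b * c * d ∣ (1 - Y - Z) - X := by
    rwa [show a * b * c * d = a * b * (c * d) by ring]
  exact Int.modEq_iff_dvd.mpr this
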